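/- arXiv:1911.07758 — 5 statements merged into one kernel-verified Lean document; each statement's English description precedes it below -/
import Mathlib

section
/- Let Ω ⊆ ℝⁿ be nonempty closed convex, f be L-Lipschitz differentiable and bounded below on Ω by f̲, β ∈ (0, 1/L], γ ∈ (0,1), and {ω_k} ⊆ [0,∞) with Σ ω_k = ω̂ < ∞. Suppose a sequence {x_k} ⊆ Ω satisfies, with v_k = x_k − β∇f(x_k), p_k(z) = (1/2)‖z − v_k‖², and z_k* = P_Ω(v_k): (i) p_k(x_{k+1}) ≤ p_k(x_k), and (ii) p_k(x_k) − p_k(x_{k+1}) + ω_k ≥ γ(p_k(x_k) − p_k(z_k*) + ω_k). Then (1/k) Σ_{t=0}^{k−1} ‖x_t − z_t*‖² ≤ (1/k)·(2/γ)·(β(f(x_0) − f̲) + (1−γ)ω̂), so the ergodic average of the optimality residual converges at rate O(1/k). -/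
open scoped RealInnerProductSpace

section Aux

variable {F : Type*} [NormedAddCommGroup F] [InnerProductSpace ℝ F] [CompleteSpace F]

lemma grad_apply (f : F → ℝ) (p y : F) : ⟪gradient f p, y⟫ = fderiv ℝ f p y := by
  simp [gradient, InnerProductSpace.toDual_symm_apply]

lemma descent_lemma (f : F → ℝ) (hf : Differentiable ℝ f) (L : ℝ) (hL : 0 ≤ L)
    (hlip : ∀ x y, ‖gradient f x - gradient f y‖ ≤ L * ‖x - y‖) (a d : F) :
    f (a + d) ≤ f a + ⟪gradient f a, d⟫ + L / 2 * ‖d‖ ^ 2 := by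
  set φ : ℝ → ℝ := fun t => f (a + t • d) with hφdef
  have hφ : ∀ t : ℝ, HasDerivAt φ ⟪gradient f (a + t • d), d⟫ t := by
    intro t
    have hc : HasDerivAt (fun t : ℝ => a + t • d) d t := by
      simpa using ((hasDerivAt_id t).smul_const d).const_add a
    have := (hf (a + t • d)).hasFDerivAt.comp_hasDerivAt t hc
    rw [grad_apply]
    exact this
  set ψ : ℝ → ℝ := fun t => f a + t * ⟪gradient f a, d⟫ + L / 2 * ‖d‖ ^ 2 * t ^ 2 - φ t
    with hψdef
  have hψ : ∀ t : ℝ, HasDerivAt ψ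
      (⟪gradient f a, d⟫ + L / 2 * ‖d‖ ^ 2 * (2 * t) - ⟪gradient f (a + t • d), d⟫) t := by
    intro t
    have h1 : HasDerivAt (fun t : ℝ => f a + t * ⟪gradient f a, d⟫ + L / 2 * ‖d‖ ^ 2 * t ^ 2)
        (⟪gradient f a, d⟫ + L / 2 * ‖d‖ ^ 2 * (2 * t)) t := by
      have ha : HasDerivAt (fun t : ℝ => t * ⟪gradient f a, d⟫) ⟪gradient f a, d⟫ t := by
        simpa using (hasDerivAt_id t).mul_const ⟪gradient f a, d⟫
      have hb : HasDerivAt (fun t : ℝ => L / 2 * ‖d‖ ^ 2 * t ^ 2)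
          (L / 2 * ‖d‖ ^ 2 * (2 * t)) t := by
        have := (hasDerivAt_pow 2 t).const_mul (L / 2 * ‖d‖ ^ 2)
        simpa [mul_comm, mul_assoc, mul_left_comm] using this
      exact (ha.const_add (f a)).add hb
    exact h1.sub (hφ t)
  have hmono : MonotoneOn ψ (Set.Icc (0 : ℝ) 1) := by
    apply monotoneOn_of_deriv_nonneg (convex_Icc 0 1)
    · exact fun t _ => ((hψ t).differentiableAt).continuousAt.continuousWithinAt
    · exact fun t _ => ((hψ t).differentiableAt).differentiableWithinAt
    · intro t ht
      rw [interior_Icc] at ht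
      rw [(hψ t).deriv]
      have key : ⟪gradient f (a + t • d) - gradient f a, d⟫ ≤ L * t * ‖d‖ ^ 2 := by
        calc ⟪gradient f (a + t • d) - gradient f a, d⟫
            ≤ ‖gradient f (a + t • d) - gradient f a‖ * ‖d‖ := real_inner_le_norm _ _
          _ ≤ (L * ‖(a + t • d) - a‖) * ‖d‖ := by
              have := hlip (a + t • d) a
              nlinarith [norm_nonneg d]
          _ = L * t * ‖d‖ ^ 2 := by
              rw [add_sub_cancel_left, norm_smul]
              simp [Real.norm_eq_abs, abs_of_pos ht.1]
              ring
      have : ⟪gradient f (a + t • d), d⟫ - ⟪gradient f a, d⟫ ≤ L * t * ‖d‖ ^ 2 := by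
        rw [← inner_sub_left]; exact key
      nlinarith
  have h01 := hmono (Set.left_mem_Icc.2 zero_le_one) (Set.right_mem_Icc.2 zero_le_one)
    zero_le_one
  have hψ0 : ψ 0 = 0 := by simp [hψdef, hφdef]
  have hψ1 : ψ 1 = f a + ⟪gradient f a, d⟫ + L / 2 * ‖d‖ ^ 2 - f (a + d) := by
    simp [hψdef, hφdef]
  rw [hψ0, hψ1] at h01
  linarith

lemma proj_inner_le {Ω : Set F} (hconv : Convex ℝ Ω) {v z : F} (hz : z ∈ Ω)
    (hproj : ∀ y ∈ Ω, ‖v - z‖ ≤ ‖v - y‖) {y : F} (hy : y ∈ Ω) :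
    ⟪v - z, y - z⟫ ≤ 0 := by
  have : (‖v - z‖ = ⨅ w : Ω, ‖v - w‖) := by
    haveI : Nonempty Ω := ⟨⟨z, hz⟩⟩
    refine le_antisymm (le_ciInf fun w => hproj w w.2) ?_
    exact ciInf_le ⟨0, fun _ ⟨_, h⟩ => h ▸ norm_nonneg _⟩ (⟨z, hz⟩ : Ω)
  exact (norm_eq_iInf_iff_real_inner_le_zero hconv hz).1 this y hy

end Aux

/-- O(1/k) ergodic complexity of the inexact gradient projection method without
line search: the ergodic average of the optimality residual is bounded by
(1/k)·(2/γ)·(β(f(x₀) - f̲) + (1-γ)ω̂). -/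
theorem stmt_7 {n : ℕ} (Ω : Set (EuclideanSpace ℝ (Fin n)))
    (hne : Ω.Nonempty) (hclosed : IsClosed Ω) (hconv : Convex ℝ Ω)
    (f : EuclideanSpace ℝ (Fin n) → ℝ) (hf : Differentiable ℝ f)
    (L : ℝ) (hL : 0 < L)
    (hlip : ∀ x y, ‖gradient f x - gradient f y‖ ≤ L * ‖x - y‖)
    (flb : ℝ) (hbelow : ∀ y ∈ Ω, flb ≤ f y)
    (β γ : ℝ) (hβ0 : 0 < β) (hβL : β ≤ 1 / L) (hγ0 : 0 < γ) (hγ1 : γ < 1)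
    (ω : ℕ → ℝ) (hω : ∀ k, 0 ≤ ω k) (ωhat : ℝ) (hsum : HasSum ω ωhat)
    (x zs v : ℕ → EuclideanSpace ℝ (Fin n))
    (hxΩ : ∀ k, x k ∈ Ω)
    (hv : ∀ k, v k = x k - β • gradient f (x k))
    (hzsΩ : ∀ k, zs k ∈ Ω)
    (hproj : ∀ k, ∀ y ∈ Ω, ‖v k - zs k‖ ≤ ‖v k - y‖)
    (hdec : ∀ k, (1/2) * ‖x (k+1) - v k‖^2 ≤ (1/2) * ‖x k - v k‖^2)
    (hineq : ∀ k, (1/2) * ‖x k - v k‖^2 - (1/2) * ‖x (k+1) - v k‖^2 + ω k ≥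
      γ * ((1/2) * ‖x k - v k‖^2 - (1/2) * ‖zs k - v k‖^2 + ω k)) :
    ∀ k : ℕ, 0 < k →
      (1 / (k : ℝ)) * ∑ t ∈ Finset.range k, ‖x t - zs t‖^2 ≤
        (1 / (k : ℝ)) * ((2 / γ) * (β * (f (x 0) - flb) + (1 - γ) * ωhat)) := by
  have hβL' : β * L ≤ 1 := by
    rw [div_eq_mul_inv, one_mul] at hβL
    calc β * L ≤ L⁻¹ * L := by nlinarith
      _ = 1 := inv_mul_cancel₀ hL.ne'
  -- per-step key inequality
  have key : ∀ t : ℕ, (γ / 2) * ‖x t - zs t‖ ^ 2 ≤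
      β * (f (x t) - f (x (t + 1))) + (1 - γ) * ω t := by
    intro t
    -- projection inequality
    have hproj2 : ‖x t - zs t‖ ^ 2 + ‖zs t - v t‖ ^ 2 ≤ ‖x t - v t‖ ^ 2 := by
      have hin : ⟪v t - zs t, x t - zs t⟫ ≤ 0 :=
        proj_inner_le hconv (hzsΩ t) (hproj t) (hxΩ t)
      have hexp : ‖x t - v t‖ ^ 2 =
          ‖x t - zs t‖ ^ 2 + 2 * ⟪x t - zs t, zs t - v t⟫ + ‖zs t - v t‖ ^ 2 := by
        have := norm_add_sq_real (x t - zs t) (zs t - v t)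
        simpa [sub_add_sub_cancel] using this
      have hsymm : ⟪x t - zs t, zs t - v t⟫ = - ⟪v t - zs t, x t - zs t⟫ := by
        rw [real_inner_comm]
        have : zs t - v t = -(v t - zs t) := by abel
        rw [this, inner_neg_left]
      rw [hexp, hsymm]; linarith
    -- descent inequality: A - C ≤ β (f x_t - f x_{t+1})
    have hAC : (1/2) * ‖x t - v t‖ ^ 2 - (1/2) * ‖x (t+1) - v t‖ ^ 2 ≤
        β * (f (x t) - f (x (t + 1))) := by
      set g := gradient f (x t) with hg
      set d := x (t + 1) - x t with hd
      have hdesc : f (x t + d) ≤ f (x t) + ⟪g, d⟫ + L / 2 * ‖d‖ ^ 2 :=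
        descent_lemma f hf L hL.le hlip (x t) d
      have hxd : x t + d = x (t + 1) := by rw [hd]; abel
      rw [hxd] at hdesc
      have h1 : x t - v t = β • g := by rw [hv]; abel
      have h2 : x (t+1) - v t = d + β • g := by rw [hv, hd]; abel
      have hn1 : ‖x t - v t‖ ^ 2 = β ^ 2 * ‖g‖ ^ 2 := by
        rw [h1, norm_smul, Real.norm_eq_abs, mul_pow, sq_abs]
      have hn2 : ‖x (t+1) - v t‖ ^ 2 = ‖d‖ ^ 2 + 2 * (β * ⟪d, g⟫) + β ^ 2 * ‖g‖ ^ 2 := by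
        rw [h2, norm_add_sq_real, real_inner_smul_right, norm_smul, Real.norm_eq_abs,
          mul_pow, sq_abs]
      have hdg : ⟪d, g⟫ = ⟪g, d⟫ := real_inner_comm _ _
      rw [hn1, hn2, hdg]
      nlinarith [norm_nonneg d, sq_nonneg ‖d‖]
    -- combine with hineq
    have h := hineq t
    have hγmul : γ * ((1/2) * ‖x t - zs t‖ ^ 2) ≤
        γ * ((1/2) * ‖x t - v t‖^2 - (1/2) * ‖zs t - v t‖^2) := by
      apply mul_le_mul_of_nonneg_left _ hγ0.le
      linarith
    nlinarith
  intro k hk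
  apply mul_le_mul_of_nonneg_left _ (by positivity : (0:ℝ) ≤ 1 / (k:ℝ))
  -- sum the key inequality
  have hsumkey : (γ / 2) * ∑ t ∈ Finset.range k, ‖x t - zs t‖ ^ 2 ≤
      β * (f (x 0) - f (x k)) + (1 - γ) * ∑ t ∈ Finset.range k, ω t := by
    have := Finset.sum_le_sum (fun t (_ : t ∈ Finset.range k) => key t)
    rw [Finset.mul_sum]
    calc ∑ t ∈ Finset.range k, γ / 2 * ‖x t - zs t‖ ^ 2
        ≤ ∑ t ∈ Finset.range k, (β * (f (x t) - f (x (t+1))) + (1 - γ) * ω t) := this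
      _ = β * (f (x 0) - f (x k)) + (1 - γ) * ∑ t ∈ Finset.range k, ω t := by
          rw [Finset.sum_add_distrib, ← Finset.mul_sum, ← Finset.mul_sum,
            Finset.sum_range_sub' (fun i => f (x i))]
  have hflb : flb ≤ f (x k) := hbelow _ (hxΩ k)
  have hωsum : ∑ t ∈ Finset.range k, ω t ≤ ωhat :=
    sum_le_hasSum _ (fun t _ => hω t) hsum
  have hfinal : (γ / 2) * ∑ t ∈ Finset.range k, ‖x t - zs t‖ ^ 2 ≤
      β * (f (x 0) - flb) + (1 - γ) * ωhat := by
    have h1 : β * (f (x 0) - f (x k)) ≤ β * (f (x 0) - flb) := by nlinarith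
    have h2 : (1 - γ) * ∑ t ∈ Finset.range k, ω t ≤ (1 - γ) * ωhat := by nlinarith
    linarith
  calc ∑ t ∈ Finset.range k, ‖x t - zs t‖ ^ 2
      = (2 / γ) * ((γ / 2) * ∑ t ∈ Finset.range k, ‖x t - zs t‖ ^ 2) := by
        field_simp
    _ ≤ (2 / γ) * (β * (f (x 0) - flb) + (1 - γ) * ωhat) :=
        mul_le_mul_of_nonneg_left hfinal (by positivity)
end

section
/- Under the same hypotheses as the preceding complexity theorem (iterates {x_k} of the inexact gradient projection method without line search, with p_k(x_{k+1}) ≤ p_k(x_k) and the γ-duality-gap termination condition, Σ ω_k < ∞, f bounded below), the sequences p_k(x_k) − p_k(x_{k+1}) and p_k(x_k) − p_k(z_k*) both converge to 0 as k → ∞. -/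
open scoped RealInnerProductSpace

lemma descent {n : ℕ} (f : EuclideanSpace ℝ (Fin n) → ℝ) (hf : Differentiable ℝ f)
    (L : ℝ) (hL : 0 < L)
    (hlip : ∀ x y, ‖gradient f x - gradient f y‖ ≤ L * ‖x - y‖)
    (x y : EuclideanSpace ℝ (Fin n)) :
    f y ≤ f x + ⟪gradient f x, y - x⟫ + L / 2 * ‖y - x‖ ^ 2 := by
  set d := y - x with hd
  set g : ℝ → ℝ := fun t => f (x + t • d) - t * ⟪gradient f x, d⟫ - L * t ^ 2 / 2 * ‖d‖ ^ 2
    with hgdef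
  have hderiv : ∀ t : ℝ, HasDerivAt g
      (⟪gradient f (x + t • d), d⟫ - ⟪gradient f x, d⟫ - L * t * ‖d‖ ^ 2) t := by
    intro t
    have hline : HasDerivAt (fun t : ℝ => x + t • d) d t := by
      simpa using ((hasDerivAt_id t).smul_const d).const_add x
    have hgrad := (hf (x + t • d)).hasGradientAt
    have hcomp : HasDerivAt (fun t : ℝ => f (x + t • d)) ⟪gradient f (x + t • d), d⟫ t := by
      have := (hgrad.hasFDerivAt).comp_hasDerivAt t hline
      simp at this; rw [hgrad.hasFDerivAt.fderiv] at this
      simpa [Function.comp_def] using this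
    have h2 : HasDerivAt (fun t : ℝ => t * ⟪gradient f x, d⟫) ⟪gradient f x, d⟫ t := by
      simpa using (hasDerivAt_id t).mul_const ⟪gradient f x, d⟫
    have h3 : HasDerivAt (fun t : ℝ => L * t ^ 2 / 2 * ‖d‖ ^ 2) (L * t * ‖d‖ ^ 2) t := by
      have h := (((hasDerivAt_pow 2 t).const_mul L).div_const 2).mul_const (‖d‖ ^ 2)
      refine h.congr_deriv ?_; push_cast; ring
    exact (hcomp.sub h2).sub h3
  have hg1 : g 1 ≤ g 0 := by
    have hanti : AntitoneOn g (Set.Icc (0:ℝ) 1) := by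
      apply antitoneOn_of_deriv_nonpos (convex_Icc 0 1)
      · exact fun t _ => ((hderiv t).differentiableAt.continuousAt).continuousWithinAt
      · intro t ht
        exact (hderiv t).differentiableAt.differentiableWithinAt
      · intro t ht
        rw [(hderiv t).deriv]
        have ht0 : (0:ℝ) ≤ t := (Set.mem_Ioo.mp (by simpa using ht)).1.le
        have h1 : ⟪gradient f (x + t • d), d⟫ - ⟪gradient f x, d⟫
            = ⟪gradient f (x + t • d) - gradient f x, d⟫ := by
          rw [inner_sub_left]
        rw [h1]
        have h2 : ⟪gradient f (x + t • d) - gradient f x, d⟫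
            ≤ ‖gradient f (x + t • d) - gradient f x‖ * ‖d‖ := real_inner_le_norm _ _
        have h3 : ‖gradient f (x + t • d) - gradient f x‖ ≤ L * ‖t • d‖ := by
          simpa using hlip (x + t • d) x
        have h4 : ‖t • d‖ = t * ‖d‖ := by
          rw [norm_smul]; simp [abs_of_nonneg ht0]
        rw [h4] at h3
        nlinarith [norm_nonneg d, mul_le_mul_of_nonneg_right h3 (norm_nonneg d)]
    exact hanti (by norm_num) (by norm_num) (by norm_num)
  have h0 : g 0 = f x := by simp [hgdef]
  have h1 : g 1 = f y - ⟪gradient f x, d⟫ - L / 2 * ‖d‖ ^ 2 := by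
    simp [hgdef]; simp [hd]
  rw [h0, h1] at hg1
  linarith


/-- For the inexact gradient projection method without line search, the subproblem
objective reductions induced by the inexact iterate and by the exact projection
both converge to zero. -/
theorem stmt_8 {n : ℕ} (Ω : Set (EuclideanSpace ℝ (Fin n)))
    (hne : Ω.Nonempty) (hclosed : IsClosed Ω) (hconv : Convex ℝ Ω)
    (f : EuclideanSpace ℝ (Fin n) → ℝ) (hf : Differentiable ℝ f)
    (L : ℝ) (hL : 0 < L)
    (hlip : ∀ x y, ‖gradient f x - gradient f y‖ ≤ L * ‖x - y‖)
    (flb : ℝ) (hbelow : ∀ y ∈ Ω, flb ≤ f y)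
    (β γ : ℝ) (hβ0 : 0 < β) (hβL : β ≤ 1 / L) (hγ0 : 0 < γ) (hγ1 : γ < 1)
    (ω : ℕ → ℝ) (hω : ∀ k, 0 ≤ ω k) (ωhat : ℝ) (hsum : HasSum ω ωhat)
    (x zs v : ℕ → EuclideanSpace ℝ (Fin n))
    (hxΩ : ∀ k, x k ∈ Ω)
    (hv : ∀ k, v k = x k - β • gradient f (x k))
    (hzsΩ : ∀ k, zs k ∈ Ω)
    (hproj : ∀ k, ∀ y ∈ Ω, ‖v k - zs k‖ ≤ ‖v k - y‖)
    (hdec : ∀ k, (1/2) * ‖x (k+1) - v k‖^2 ≤ (1/2) * ‖x k - v k‖^2)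
    (hineq : ∀ k, (1/2) * ‖x k - v k‖^2 - (1/2) * ‖x (k+1) - v k‖^2 + ω k ≥
      γ * ((1/2) * ‖x k - v k‖^2 - (1/2) * ‖zs k - v k‖^2 + ω k)) :
    Filter.Tendsto (fun k => (1/2) * ‖x k - v k‖^2 - (1/2) * ‖x (k+1) - v k‖^2)
      Filter.atTop (nhds 0) ∧
    Filter.Tendsto (fun k => (1/2) * ‖x k - v k‖^2 - (1/2) * ‖zs k - v k‖^2)
      Filter.atTop (nhds 0) := by
  set a : ℕ → ℝ := fun k => (1/2) * ‖x k - v k‖^2 - (1/2) * ‖x (k+1) - v k‖^2 with ha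
  set b : ℕ → ℝ := fun k => (1/2) * ‖x k - v k‖^2 - (1/2) * ‖zs k - v k‖^2 with hb
  have ha0 : ∀ k, 0 ≤ a k := fun k => by have := hdec k; simp only [ha]; linarith
  have hb0 : ∀ k, 0 ≤ b k := by
    intro k
    have h := hproj k (x k) (hxΩ k)
    have h2 : ‖zs k - v k‖ ≤ ‖x k - v k‖ := by
      rwa [norm_sub_rev (zs k), norm_sub_rev (x k)]
    have := pow_le_pow_left₀ (norm_nonneg _) h2 2
    simp only [hb]; linarith
  -- key: f (x (k+1)) ≤ f (x k) - a k / β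
  have key : ∀ k, f (x (k+1)) ≤ f (x k) - a k / β := by
    intro k
    set d := x (k+1) - x k with hd
    set g := gradient f (x k) with hg
    have h1 : x k - v k = β • g := by rw [hv]; exact sub_sub_cancel _ _
    have h2 : x (k+1) - v k = d + β • g := by rw [hv, hd]; abel
    have hexp : ‖d + β • g‖^2 = ‖d‖^2 + 2 * ⟪d, β • g⟫ + ‖β • g‖^2 :=
      norm_add_sq_real d (β • g)
    have hak : a k = -(1/2) * ‖d‖^2 - β * ⟪d, g⟫ := by
      simp only [ha, h1, h2, hexp, real_inner_smul_right]; ring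
    have hdes := descent f hf L hL hlip (x k) (x (k+1))
    have hcomm : ⟪g, d⟫ = ⟪d, g⟫ := real_inner_comm _ _
    rw [← hd, hcomm] at hdes
    have hLβ : L * β ≤ 1 := by
      rw [le_div_iff₀ hL] at hβL; linarith [mul_comm L β]
    have hdn : (0:ℝ) ≤ ‖d‖^2 := sq_nonneg _
    have hip : ⟪d, g⟫ = (-(a k) - (1/2) * ‖d‖^2) / β := by
      field_simp at hak ⊢; linarith
    rw [hip] at hdes
    have hsplit : (-(a k) - (1/2) * ‖d‖^2) / β = -(a k / β) - ‖d‖^2 / (2 * β) := by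
      field_simp
    have h5 : L / 2 * ‖d‖^2 ≤ ‖d‖^2 / (2 * β) := by
      rw [le_div_iff₀ (by positivity)]
      nlinarith [mul_nonneg hdn (sub_nonneg.2 hLβ)]
    rw [hsplit] at hdes
    linarith
  have hanti : Antitone (fun k => f (x k)) := by
    apply antitone_nat_of_succ_le
    intro k
    have := key k
    have := div_nonneg (ha0 k) hβ0.le
    linarith
  have hbdd : BddBelow (Set.range fun k => f (x k)) := by
    refine ⟨flb, ?_⟩
    rintro _ ⟨k, rfl⟩
    exact hbelow (x k) (hxΩ k)
  have hconvF : Filter.Tendsto (fun k => f (x k)) Filter.atTop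
      (nhds (⨅ k, f (x k))) := tendsto_atTop_ciInf hanti hbdd
  have hconvF1 : Filter.Tendsto (fun k => f (x (k+1))) Filter.atTop
      (nhds (⨅ k, f (x k))) := hconvF.comp (Filter.tendsto_add_atTop_nat 1)
  have hdiff0 : Filter.Tendsto (fun k => f (x k) - f (x (k+1))) Filter.atTop (nhds 0) := by
    simpa using hconvF.sub hconvF1
  have haT : Filter.Tendsto a Filter.atTop (nhds 0) := by
    apply squeeze_zero ha0 (g := fun k => β * (f (x k) - f (x (k+1))))
    · intro k
      have h' : a k / β ≤ f (x k) - f (x (k+1)) := by linarith [key k]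
      have h2 := mul_le_mul_of_nonneg_right h' hβ0.le
      rw [div_mul_cancel₀ _ (ne_of_gt hβ0)] at h2
      linarith [h2]
    · simpa using hdiff0.const_mul β
  refine ⟨haT, ?_⟩
  have hωT : Filter.Tendsto ω Filter.atTop (nhds 0) := hsum.summable.tendsto_atTop_zero
  apply squeeze_zero hb0 (g := fun k => (a k + (1 - γ) * ω k) / γ)
  · intro k
    rw [le_div_iff₀ hγ0]
    simp only [ha, hb]
    nlinarith [hineq k, hω k]
  · have : Filter.Tendsto (fun k => a k + (1 - γ) * ω k) Filter.atTop (nhds 0) := by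
      simpa using haT.add (hωT.const_mul (1 - γ))
    simpa using this.div_const γ
end

section
/- Let v ∈ ℝⁿ with all components nonnegative and let τ > 0. There exists a unique ν ∈ ℝ such that Σ_{i=1}^n max(v_i − ν, 0) = τ, and the Euclidean projection of v onto the simplex S(τ,n) = {x : Σx_i = τ, x ≥ 0} is given componentwise by (P_S(v))_i = max(v_i − ν, 0). -/
/-- There is a unique `ν` with `Σ max(vᵢ - ν, 0) = τ`, and the simplex projection
of a nonnegative vector `v` is given componentwise by `max(vᵢ - ν, 0)`. -/
theorem stmt_10 {n : ℕ} (hn : 0 < n) (τ : ℝ) (hτ : 0 < τ)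
    (v : EuclideanSpace ℝ (Fin n)) (hv : ∀ i, 0 ≤ v i) :
    (∃! ν : ℝ, ∑ i, max (v i - ν) 0 = τ) ∧
    ∀ ν : ℝ, (∑ i, max (v i - ν) 0 = τ) →
      ((∑ i, max (v i - ν) 0 = τ ∧ ∀ i, 0 ≤ max (v i - ν) 0) ∧
        ∀ y : EuclideanSpace ℝ (Fin n), (∑ i, y i = τ ∧ ∀ i, 0 ≤ y i) →
          ‖v - (WithLp.equiv 2 (Fin n → ℝ)).symm (fun i => max (v i - ν) 0)‖ ≤ ‖v - y‖) := by
  have hne : Nonempty (Fin n) := ⟨⟨0, hn⟩⟩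
  set f : ℝ → ℝ := fun ν => ∑ i, max (v i - ν) 0 with hf
  have hcont : Continuous f :=
    continuous_finset_sum _ fun i _ =>
      (continuous_const.sub continuous_id).max continuous_const
  -- strict decrease where value is positive
  have hstrict : ∀ a b : ℝ, a < b → f b = τ → f b < f a := by
    intro a b hab hb
    obtain ⟨i, -, hi⟩ : ∃ i ∈ Finset.univ, 0 < max (v i - b) 0 := by
      by_contra h
      push_neg at h
      have : f b ≤ 0 := Finset.sum_nonpos fun i hi => h i hi
      linarith [hb]
    refine Finset.sum_lt_sum (fun j _ => ?_) ⟨i, Finset.mem_univ i, ?_⟩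
    · exact max_le_max (by linarith) le_rfl
    · have hvb : 0 < v i - b := by
        rcases max_cases (v i - b) 0 with ⟨h1, h2⟩ | ⟨h1, h2⟩ <;> linarith [hi.trans_eq rfl]
      calc max (v i - b) 0 = v i - b := max_eq_left hvb.le
        _ < v i - a := by linarith
        _ ≤ max (v i - a) 0 := le_max_left _ _
  have huniq : ∀ a b : ℝ, f a = τ → f b = τ → a = b := by
    intro a b ha hb
    rcases lt_trichotomy a b with h | h | h
    · exact absurd (hstrict a b h hb) (by rw [ha, hb]; exact lt_irrefl τ)
    · exact h
    · exact absurd (hstrict b a h ha) (by rw [ha, hb]; exact lt_irrefl τ)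
  -- existence via IVT
  set M : ℝ := Finset.univ.sup' Finset.univ_nonempty v with hM
  have hMv : ∀ i, v i ≤ M := fun i => Finset.le_sup' v (Finset.mem_univ i)
  have hM0 : 0 ≤ M := (hv ⟨0, hn⟩).trans (hMv ⟨0, hn⟩)
  have hfM : f M = 0 := by
    refine Finset.sum_eq_zero fun i _ => max_eq_right (by linarith [hMv i])
  have hfτ : τ ≤ f (-τ) := by
    have : ∀ i ∈ Finset.univ, τ ≤ max (v i - (-τ)) 0 := fun i _ => by
      have := hv i; exact le_trans (by linarith) (le_max_left _ _)
    calc τ = (1 : ℕ) • τ := by simp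
      _ ≤ (Finset.univ : Finset (Fin n)).card • τ := by
          exact nsmul_le_nsmul_left hτ.le (by rw [Finset.card_univ, Fintype.card_fin]; exact hn)
      _ ≤ f (-τ) := Finset.card_nsmul_le_sum _ _ _ this
  obtain ⟨ν₀, -, hν₀⟩ : ∃ ν ∈ Set.Icc (-τ) M, f ν = τ := by
    have hab : -τ ≤ M := by linarith
    have : τ ∈ Set.Icc (f M) (f (-τ)) := ⟨by rw [hfM]; exact hτ.le, hfτ⟩
    exact intermediate_value_Icc' hab hcont.continuousOn this
  refine ⟨⟨ν₀, hν₀, fun y hy => huniq y ν₀ hy hν₀⟩, ?_⟩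
  intro ν hν
  refine ⟨⟨hν, fun i => le_max_right _ _⟩, ?_⟩
  rintro y ⟨hy1, hy2⟩
  set x : EuclideanSpace ℝ (Fin n) :=
    (WithLp.equiv 2 (Fin n → ℝ)).symm (fun i => max (v i - ν) 0) with hxdef
  have hx : ∀ i, x i = max (v i - ν) 0 := fun i => rfl
  have hxsum : ∑ i, x i = τ := hν
  have hxnn : ∀ i, 0 ≤ x i := fun i => le_max_right _ _
  -- key inner product inequality
  have hkey : ∑ i, (v i - x i) * (x i - y i) ≥ 0 := by
    have h1 : ∑ i, (v i - x i) * (y i - x i) ≤ ∑ i, ν * (y i - x i) := by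
      refine Finset.sum_le_sum fun i _ => ?_
      rcases le_or_gt (v i) ν with h | h
      · have hxi : x i = 0 := by rw [hx]; exact max_eq_right (by linarith)
        rw [hxi]
        have := hy2 i
        nlinarith
      · have hxi : x i = v i - ν := by rw [hx]; exact max_eq_left (by linarith)
        rw [hxi]; ring_nf; exact le_rfl
    have h2 : ∑ i, ν * (y i - x i) = 0 := by
      rw [← Finset.mul_sum, Finset.sum_sub_distrib, hy1, hxsum]; ring
    have h3 : ∑ i, (v i - x i) * (y i - x i) ≤ 0 := h1.trans_eq h2
    have h4 : ∑ i, (v i - x i) * (x i - y i) = -∑ i, (v i - x i) * (y i - x i) := by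
      rw [← Finset.sum_neg_distrib]; exact Finset.sum_congr rfl fun i _ => by ring
    rw [h4]; linarith
  have hinner : (0 : ℝ) ≤ inner ℝ (v - x) (x - y) := by
    have : (inner ℝ (v - x) (x - y) : ℝ) = ∑ i, (v i - x i) * (x i - y i) := by
      rw [PiLp.inner_apply]
      exact Finset.sum_congr rfl fun i _ => by
        simp [PiLp.sub_apply, RCLike.inner_apply, mul_comm]
    rw [this]; exact hkey
  have hnorm : ‖v - x‖ ^ 2 ≤ ‖v - y‖ ^ 2 := by
    have hdecomp : v - y = (v - x) + (x - y) := by abel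
    rw [hdecomp, norm_add_sq_real]
    nlinarith [sq_nonneg ‖x - y‖, norm_nonneg (x - y)]
  have h1 := norm_nonneg (v - x)
  have h2 := norm_nonneg (v - y)
  nlinarith
end

section
/- Let v ∈ ℝⁿ, τ > 0, and let w = P_{S(τ,n)}(|v|) be the projection of the componentwise absolute value of v onto the simplex. If ‖v‖₁ > τ, then the Euclidean projection of v onto the ℓ₁-ball B(τ) = {x : ‖x‖₁ ≤ τ} equals sign(v) ∘ w (componentwise product); if ‖v‖₁ ≤ τ, the projection is v itself. -/
private lemma norm_le_of_abs_le {n : ℕ} (a b : EuclideanSpace ℝ (Fin n))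
    (h : ∀ i, |a i| ≤ |b i|) : ‖a‖ ≤ ‖b‖ := by
  rw [EuclideanSpace.norm_eq, EuclideanSpace.norm_eq]
  apply Real.sqrt_le_sqrt
  apply Finset.sum_le_sum
  intro i _
  rw [Real.norm_eq_abs, Real.norm_eq_abs]
  exact pow_le_pow_left₀ (abs_nonneg _) (h i) 2

/-- Reduction of the ℓ₁-ball projection to a simplex projection: if `w` is the
projection of `|v|` onto the simplex `S(τ,n)`, then the projection of `v` onto
the ℓ₁-ball of radius `τ` is `sign(v) ∘ w` when `‖v‖₁ > τ`, and `v` otherwise. -/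
theorem stmt_11 {n : ℕ} (τ : ℝ) (hτ : 0 < τ) (v : EuclideanSpace ℝ (Fin n))
    (w : EuclideanSpace ℝ (Fin n))
    (hwS : (∑ i, w i = τ ∧ ∀ i, 0 ≤ w i) ∧
      ∀ y : EuclideanSpace ℝ (Fin n), (∑ i, y i = τ ∧ ∀ i, 0 ≤ y i) →
        ‖(WithLp.equiv 2 (Fin n → ℝ)).symm (fun i => |v i|) - w‖ ≤
          ‖(WithLp.equiv 2 (Fin n → ℝ)).symm (fun i => |v i|) - y‖) :
    ((∑ i, |v i|) > τ →
      ((∑ i, |Real.sign (v i) * w i|) ≤ τ ∧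
        ∀ y ∈ {x : EuclideanSpace ℝ (Fin n) | ∑ i, |x i| ≤ τ},
          ‖v - (WithLp.equiv 2 (Fin n → ℝ)).symm (fun i => Real.sign (v i) * w i)‖ ≤
            ‖v - y‖)) ∧
    ((∑ i, |v i|) ≤ τ →
      (v ∈ {x : EuclideanSpace ℝ (Fin n) | ∑ i, |x i| ≤ τ} ∧
        ∀ y ∈ {x : EuclideanSpace ℝ (Fin n) | ∑ i, |x i| ≤ τ}, ‖v - v‖ ≤ ‖v - y‖)) := by
  obtain ⟨⟨hsum, hpos⟩, hopt⟩ := hwS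
  refine ⟨fun hgt => ⟨?_, ?_⟩, fun hle => ⟨hle, fun y _ => by simp⟩⟩
  · calc ∑ i, |Real.sign (v i) * w i| ≤ ∑ i, w i := by
          apply Finset.sum_le_sum
          intro i _
          rw [abs_mul, abs_of_nonneg (hpos i)]
          rcases Real.sign_apply_eq (v i) with h | h | h <;> simp [h, hpos i]
        _ = τ := hsum
  · intro y hy
    simp only [Set.mem_setOf_eq] at hy
    set A := ∑ i, |v i| with hA
    set B := ∑ i, |y i| with hB
    have hAB : 0 < A - B := by linarith
    set t : ℝ := (τ - B) / (A - B) with ht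
    have ht0 : 0 ≤ t := div_nonneg (by linarith) hAB.le
    have ht1 : t ≤ 1 := (div_le_one hAB).mpr (by linarith)
    set z : EuclideanSpace ℝ (Fin n) :=
      (WithLp.equiv 2 (Fin n → ℝ)).symm (fun i => |y i| + t * (|v i| - |y i|)) with hz
    have hzmem : (∑ i, z i = τ ∧ ∀ i, 0 ≤ z i) := by
      constructor
      · have : ∑ i, z i = B + t * (A - B) := by
          simp only [hz, WithLp.equiv_symm_apply, PiLp.toLp_apply, Finset.sum_add_distrib,
            ← Finset.mul_sum, Finset.sum_sub_distrib, hA, hB]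
        rw [this, ht, div_mul_cancel₀ _ hAB.ne']
        ring
      · intro i
        have : z i = (1 - t) * |y i| + t * |v i| := by
          simp only [hz, WithLp.equiv_symm_apply, PiLp.toLp_apply]; ring
        rw [this]
        exact add_nonneg (mul_nonneg (by linarith) (abs_nonneg _)) (mul_nonneg ht0 (abs_nonneg _))
    calc ‖v - (WithLp.equiv 2 (Fin n → ℝ)).symm (fun i => Real.sign (v i) * w i)‖
        ≤ ‖(WithLp.equiv 2 (Fin n → ℝ)).symm (fun i => |v i|) - w‖ := by
          apply norm_le_of_abs_le
          intro i
          simp only [PiLp.sub_apply, WithLp.equiv_symm_apply, PiLp.toLp_apply]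
          rcases lt_trichotomy (v i) 0 with h | h | h
          · rw [Real.sign_of_neg h, abs_of_neg h]
            rw [show v i - -1 * w i = -(-v i - w i) by ring, abs_neg]
          · simp [h, Real.sign_zero, abs_nonneg]
          · rw [Real.sign_of_pos h, abs_of_pos h, one_mul]
      _ ≤ ‖(WithLp.equiv 2 (Fin n → ℝ)).symm (fun i => |v i|) - z‖ := hopt z hzmem
      _ ≤ ‖v - y‖ := by
          apply norm_le_of_abs_le
          intro i
          simp only [PiLp.sub_apply, WithLp.equiv_symm_apply, PiLp.toLp_apply, hz]
          have h1 : |v i| - (|y i| + t * (|v i| - |y i|)) = (1 - t) * (|v i| - |y i|) := by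
            ring
          rw [h1, abs_mul, abs_of_nonneg (by linarith : (0:ℝ) ≤ 1 - t)]
          calc (1 - t) * |(|v i| - |y i|)| ≤ 1 * |(|v i| - |y i|)| := by
                apply mul_le_mul_of_nonneg_right (by linarith) (abs_nonneg _)
            _ = |(|v i| - |y i|)| := one_mul _
            _ ≤ |v i - y i| := abs_abs_sub_abs_le_abs_sub _ _
end

section
/- Let v ∈ ℝⁿ₊, τ > 0, and set ν₀ = (Σ_i v_i − τ)/n. If there exists an index j with v_j − ν₀ < 0, then Σ_{i=1}^n max(v_i − ν₀, 0) > τ, and consequently the unique root ν of Σ_i max(v_i − ν, 0) = τ satisfies ν > ν₀. In particular, the j-th component of the simplex projection P_{S(τ,n)}(v) is zero, and more generally every index l with v_l − ν₀ ≤ 0 has (P_{S(τ,n)}(v))_l = 0. -/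
/-- If some component of the hyperplane projection is negative
(`v_j - ν₀ < 0` with `ν₀ = (Σᵢvᵢ - τ)/n`), then `Σᵢ max(vᵢ - ν₀, 0) > τ`, the unique
root `ν` of `Σᵢ max(vᵢ - ν, 0) = τ` satisfies `ν > ν₀`, and every index `l` with
`v_l - ν₀ ≤ 0` has zero `l`-th component in the simplex projection `max(v_l - ν, 0) = 0`. -/
theorem stmt_14 {n : ℕ} (hn : 0 < n) (τ : ℝ) (hτ : 0 < τ)
    (v : EuclideanSpace ℝ (Fin n)) (hv : ∀ i, 0 ≤ v i)
    (ν₀ : ℝ) (hν₀ : ν₀ = ((∑ i, v i) - τ) / n)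
    (j : Fin n) (hj : v j - ν₀ < 0) :
    (∑ i, max (v i - ν₀) 0) > τ ∧
    ∀ ν : ℝ, (∑ i, max (v i - ν) 0 = τ) →
      ν > ν₀ ∧ max (v j - ν) 0 = 0 ∧ ∀ l, v l - ν₀ ≤ 0 → max (v l - ν) 0 = 0 := by
  have hn' : (n : ℝ) ≠ 0 := Nat.cast_ne_zero.mpr hn.ne'
  have hsum : ∑ i, (v i - ν₀) = τ := by
    rw [Finset.sum_sub_distrib, Finset.sum_const, Finset.card_univ, Fintype.card_fin, hν₀, nsmul_eq_mul]
    field_simp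
    ring
  have hgt : (∑ i, max (v i - ν₀) 0) > τ := by
    rw [← hsum]
    refine Finset.sum_lt_sum (fun i _ => le_max_left _ _) ⟨j, Finset.mem_univ j, ?_⟩
    simpa [max_eq_right hj.le] using hj
  refine ⟨hgt, fun ν hν => ?_⟩
  have hνgt : ν > ν₀ := by
    by_contra h
    push_neg at h
    have : (∑ i, max (v i - ν₀) 0) ≤ ∑ i, max (v i - ν) 0 :=
      Finset.sum_le_sum fun i _ => max_le_max (by linarith) le_rfl
    linarith
  refine ⟨hνgt, ?_, fun l hl => ?_⟩
  · exact max_eq_right (by linarith)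
  · exact max_eq_right (by linarith)
end
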